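/- Let c_B > 0, c_I > 0, t_B > 0, t_I > 0 with c_B ≤ c_I, and let ξ : ℝ → ℝ be continuous and satisfy (3/4)·c_B·(t - t₀ - t_B) ≤ ξ(t) - ξ(t₀) ≤ (5/4)·c_I·(t - t₀ + t_I) for all t₀ ∈ ℝ and t ≥ t₀. Fix C₀ > (5/4)·c_I·t_I and define η(t) = ξ(t₀) + C₀ + (c_B/2)·(t - t₀) for t ≥ t₀. Then the first hitting time T₁ = min{ t ≥ t₀ : ξ(t) = η(t) } exists, and T₁ - t₀ ∈ [T_min, T_max] where T_min = (4C₀ - 5c_I t_I)/(5c_I - c_B) and T_max = (4C₀ + 3c_B t_B)/c_B. -/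

import Mathlib

/-- Existence and bounds for the first hitting time of the interface location
against the line `η(t) = ξ(t₀) + C₀ + (c_B/2)(t - t₀)`. -/
theorem stmt_0 (cB cI tB tI C₀ t₀ : ℝ) (ξ : ℝ → ℝ)
    (hcB : 0 < cB) (hcI : 0 < cI) (htB : 0 < tB) (htI : 0 < tI)
    (hcBI : cB ≤ cI) (hξ : Continuous ξ)
    (hlow : ∀ s t : ℝ, s ≤ t → 3/4 * cB * (t - s - tB) ≤ ξ t - ξ s)
    (hup : ∀ s t : ℝ, s ≤ t → ξ t - ξ s ≤ 5/4 * cI * (t - s + tI))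
    (hC₀ : 5/4 * cI * tI < C₀) :
    ∃ T₁ : ℝ,
      IsLeast {t : ℝ | t₀ ≤ t ∧ ξ t = ξ t₀ + C₀ + cB / 2 * (t - t₀)} T₁ ∧
      (4 * C₀ - 5 * cI * tI) / (5 * cI - cB) ≤ T₁ - t₀ ∧
      T₁ - t₀ ≤ (4 * C₀ + 3 * cB * tB) / cB := by
  set S := {t : ℝ | t₀ ≤ t ∧ ξ t = ξ t₀ + C₀ + cB / 2 * (t - t₀)} with hS
  have hC₀pos : 0 < C₀ := lt_of_le_of_lt (by positivity) hC₀
  set Tmax : ℝ := (4 * C₀ + 3 * cB * tB) / cB with hTmax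
  have hTmaxpos : 0 < Tmax := by positivity
  -- a witness in S at or before t₀ + Tmax via IVT
  set g : ℝ → ℝ := fun t => ξ t - (ξ t₀ + C₀ + cB / 2 * (t - t₀)) with hg
  have hgc : Continuous g := by
    apply hξ.sub; continuity
  have hga : g t₀ ≤ 0 := by simp [hg]; linarith
  have hgb : 0 ≤ g (t₀ + Tmax) := by
    have h := hlow t₀ (t₀ + Tmax) (by linarith)
    have hTm : cB * Tmax = 4 * C₀ + 3 * cB * tB := by
      rw [hTmax]; field_simp
    simp only [hg]
    nlinarith
  have hmem : (0 : ℝ) ∈ Set.Icc (g t₀) (g (t₀ + Tmax)) := ⟨hga, hgb⟩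
  obtain ⟨c, hc, hgc0⟩ := intermediate_value_Icc (by linarith : t₀ ≤ t₀ + Tmax)
    hgc.continuousOn hmem
  have hcS : c ∈ S := ⟨hc.1, by simpa [hg, sub_eq_zero] using hgc0⟩
  have hne : S.Nonempty := ⟨c, hcS⟩
  have hbdd : BddBelow S := ⟨t₀, fun x hx => hx.1⟩
  have hclosed : IsClosed S := by
    have : S = {t : ℝ | t₀ ≤ t} ∩ {t : ℝ | ξ t = ξ t₀ + C₀ + cB / 2 * (t - t₀)} := rfl
    rw [this]
    exact (isClosed_le continuous_const continuous_id).inter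
      (isClosed_eq hξ (by continuity))
  have hInf : sInf S ∈ S := hclosed.csInf_mem hne hbdd
  refine ⟨sInf S, ⟨hInf, fun x hx => csInf_le hbdd hx⟩, ?_, ?_⟩
  · have hge : t₀ ≤ sInf S := hInf.1
    have h := hup t₀ (sInf S) hge
    rw [hInf.2] at h
    have hpos : 0 < 5 * cI - cB := by linarith
    rw [div_le_iff₀ hpos]
    nlinarith
  · have hle : sInf S ≤ c := csInf_le hbdd hcS
    have := hc.2
    linarith
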